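/- Let a ≥ 1, 0 ≤ s < a, and let r be a positive integer whose reduced NAF has bitlength a - s. Then deg(B_{2^a - r}) = s + deg(B_r). -/
import Mathlib


open Polynomial in
/-- The Stern polynomial: `B 0 = 0`, `B 1 = 1`, `B (2n) = t * B n`, `B (2n+1) = B n + B (n+1)`. -/
noncomputable def sternP : ℕ → Polynomial ℕ
  | 0 => 0
  | 1 => 1
  | n + 2 =>
    if (n + 2) % 2 = 0 then X * sternP (n / 2 + 1)
    else sternP (n / 2 + 1) + sternP (n / 2 + 2)
decreasing_by all_goals omega

/-- The digits of a BSD representation lie in {-1, 0, 1}. -/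
def IsBSDDigits {i : ℕ} (b : Fin i → ℤ) : Prop := ∀ j, b j ∈ ({-1, 0, 1} : Set ℤ)

/-- The value represented by the digit string `b` (least significant digit `b 0`). -/
def bsdVal {i : ℕ} (b : Fin i → ℤ) : ℤ := ∑ j : Fin i, b j * 2 ^ (j : ℕ)

/-- `b` is a (not necessarily reduced) non-adjacent form digit string of length `k`:
digits in {-1,0,1}, no two adjacent digits both nonzero, and nonzero leading digit
(when `k > 0`). -/
def IsReducedNAF {k : ℕ} (b : Fin k → ℤ) : Prop :=
  IsBSDDigits b ∧
  (∀ j : Fin k, ∀ h : (j : ℕ) + 1 < k, b j = 0 ∨ b ⟨(j : ℕ) + 1, h⟩ = 0) ∧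
  (∀ h : 0 < k, b ⟨k - 1, Nat.sub_lt h one_pos⟩ ≠ 0)

/-- `m` has a reduced NAF representation of bitlength `k`. -/
def HasNAFLen (m : ℤ) (k : ℕ) : Prop :=
  ∃ b : Fin k → ℤ, IsReducedNAF b ∧ bsdVal b = m

/-- `I k`: the set of positive integers of NAF-bitlength `k`. -/
def NAFInterval (k : ℕ) : Set ℕ := {n : ℕ | HasNAFLen (n : ℤ) k}

/-- `a k = min I k`: `a 1 = 1`, `a 2 = 2`, `a k = 2^(k-2) + a (k-2)`. -/
def aseq : ℕ → ℕ
  | 0 => 0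
  | 1 => 1
  | 2 => 2
  | k + 3 => 2 ^ (k + 1) + aseq (k + 1)

/-- The NAF-bitlength of `n`. -/
noncomputable def nafLen (n : ℕ) : ℕ := sInf {k : ℕ | HasNAFLen (n : ℤ) k}

/-- The minimal Hamming weight of a BSD representation of `n` of length
equal to its NAF-bitlength. -/
noncomputable def minWeight (n : ℕ) : ℕ :=
  sInf {w : ℕ | ∃ b : Fin (nafLen n) → ℤ,
    IsBSDDigits b ∧ bsdVal b = (n : ℤ) ∧ {j | b j ≠ 0}.ncard = w}

/-- `Z n`: the number of zeros in an optimal (minimal-weight) BSD representation of `n`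
of length equal to its NAF-bitlength. -/
noncomputable def Zfun (n : ℕ) : ℕ := nafLen n - minWeight n

/-- `M n`: the number of optimal (minimal-weight) BSD representations of `n`
of length equal to its NAF-bitlength. -/
noncomputable def Mfun (n : ℕ) : ℕ :=
  {b : Fin (nafLen n) → ℤ |
    IsBSDDigits b ∧ bsdVal b = (n : ℤ) ∧ {j | b j ≠ 0}.ncard = minWeight n}.ncard

section SternAux
open Polynomial

lemma sternP_even (n : ℕ) (h : 1 ≤ n) : sternP (2*n) = X * sternP n := by
  rw [show 2*n = (2*n-2)+2 by omega, sternP, if_pos (by omega),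
    show (2*n-2)/2+1 = n by omega]

lemma sternP_odd (n : ℕ) (h : 1 ≤ n) : sternP (2*n+1) = sternP n + sternP (n+1) := by
  rw [show 2*n+1 = (2*n-1)+2 by omega, sternP, if_neg (by omega),
    show (2*n-1)/2+1 = n by omega, show (2*n-1)/2+2 = n+1 by omega]

lemma sternP_eval_one (n : ℕ) (h : 1 ≤ n) : 1 ≤ (sternP n).eval 1 := by
  induction n using Nat.strong_induction_on with
  | _ n IH =>
    match n, h with
    | 1, _ => simp [sternP]
    | (n+2), _ =>
      rcases Nat.even_or_odd (n+2) with ⟨m, hm⟩ | ⟨m, hm⟩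
      · rw [hm, show m + m = 2*m by ring, sternP_even m (by omega)]
        have := IH m (by omega) (by omega)
        simp only [eval_mul, eval_X, one_mul]
        exact this
      · rw [hm, sternP_odd m (by omega)]
        have := IH m (by omega) (by omega)
        simp only [eval_add]
        omega

lemma sternP_ne_zero (n : ℕ) (h : 1 ≤ n) : sternP n ≠ 0 := by
  intro hz
  have := sternP_eval_one n h
  rw [hz] at this
  simp at this

lemma deg_even (n : ℕ) (h : 1 ≤ n) :
    (sternP (2*n)).natDegree = 1 + (sternP n).natDegree := by
  rw [sternP_even n h, natDegree_mul X_ne_zero (sternP_ne_zero n h), natDegree_X]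

lemma natDegree_add_max (p q : Polynomial ℕ) (hp : p ≠ 0) (hq : q ≠ 0) :
    (p + q).natDegree = max p.natDegree q.natDegree := by
  apply le_antisymm (natDegree_add_le p q)
  apply le_natDegree_of_ne_zero
  rw [coeff_add]
  rcases le_total p.natDegree q.natDegree with hle | hle
  · rw [max_eq_right hle]
    have := mt leadingCoeff_eq_zero.mp hq
    rw [leadingCoeff] at this
    omega
  · rw [max_eq_left hle]
    have := mt leadingCoeff_eq_zero.mp hp
    rw [leadingCoeff] at this
    omega

lemma deg_odd (n : ℕ) (h : 1 ≤ n) :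
    (sternP (2*n+1)).natDegree = max (sternP n).natDegree (sternP (n+1)).natDegree := by
  rw [sternP_odd n h, natDegree_add_max _ _ (sternP_ne_zero n h) (sternP_ne_zero (n+1) (by omega))]

lemma deg_pow (n : ℕ) : (sternP (2^n)).natDegree = n := by
  induction n with
  | zero => simp [sternP]
  | succ n IH =>
    rw [pow_succ, mul_comm, deg_even _ (Nat.one_le_two_pow), IH]
    omega

lemma three_ndvd_pow2 (n : ℕ) : ¬ (3 ∣ 2^n) := by
  intro h
  have := Nat.Prime.dvd_of_dvd_pow (p := 3) (by norm_num) h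
  omega

lemma pow2_mod3 (n : ℕ) : (Even n ∧ 2^n % 3 = 1) ∨ (Odd n ∧ 2^n % 3 = 2) := by
  induction n with
  | zero => left; simp
  | succ n IH =>
    rcases IH with ⟨he, hm⟩ | ⟨ho, hm⟩
    · right
      refine ⟨Even.add_one he, ?_⟩
      rw [pow_succ]
      omega
    · left
      refine ⟨Odd.add_one ho, ?_⟩
      rw [pow_succ]
      omega

lemma pow2_odd_eq (j : ℕ) : 2^(2*j+1) = 2 * 4^j := by
  rw [pow_succ, pow_mul]
  ring

def uu : ℕ → ℕ
  | 0 => 1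
  | j+1 => 4 * uu j + 1

def vv : ℕ → ℕ
  | 0 => 1
  | j+1 => 4 * vv j - 1

lemma uu_spec (j : ℕ) : 3 * uu j = 4^(j+1) - 1 ∧ 3 * vv j = 2 * 4^j + 1 := by
  induction j with
  | zero => simp [uu, vv]
  | succ j IH =>
    obtain ⟨h1, h2⟩ := IH
    have h4 : 1 ≤ 4^(j+1) := Nat.one_le_pow _ _ (by norm_num)
    constructor
    · show 3 * (4 * uu j + 1) = 4^(j+2) - 1
      rw [pow_succ 4 (j+1)]
      omega
    · show 3 * (4 * vv j - 1) = 2 * 4^(j+1) + 1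
      rw [pow_succ 4 j]
      have h4' : 1 ≤ 4^j := Nat.one_le_pow _ _ (by norm_num)
      omega

lemma uu_pos (j : ℕ) : 1 ≤ uu j ∧ 1 ≤ vv j := by
  have := (uu_spec j).1
  have := (uu_spec j).2
  have h4 : 1 ≤ 4^j := Nat.one_le_pow _ _ (by norm_num)
  have h4' : 4^(j+1) = 4 * 4^j := by rw [pow_succ]; ring
  omega

lemma deg_uu (j : ℕ) : (sternP (uu j)).natDegree = j ∧ (sternP (vv j)).natDegree = j := by
  induction j with
  | zero => simp [uu, vv, sternP]
  | succ j IH =>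
    obtain ⟨hu, hv⟩ := IH
    have hup := (uu_pos j).1
    have hvp := (uu_pos j).2
    have hsu := (uu_spec j).1
    have hsv := (uu_spec j).2
    have h4 : 1 ≤ 4^j := Nat.one_le_pow _ _ (by norm_num)
    have h4' : 4^(j+1) = 4 * 4^j := by rw [pow_succ]; ring
    have e1 : uu (j+1) = 2 * (2 * uu j) + 1 := by show 4 * uu j + 1 = _; ring
    have e2 : uu j + 1 = 2 * vv j := by omega
    have d1 : (sternP (2 * uu j)).natDegree = 1 + j := by rw [deg_even _ hup, hu]
    have d2 : (sternP (2 * uu j + 1)).natDegree = j + 1 := by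
      rw [deg_odd _ hup, hu, e2, deg_even _ hvp, hv]
      omega
    constructor
    · rw [e1, deg_odd _ (by omega), d1, d2]
      omega
    · have e3 : vv (j+1) = 2 * (2 * vv j - 1) + 1 := by show 4 * vv j - 1 = _; omega
      have e5 : (2 * vv j - 1) + 1 = 2 * vv j := by omega
      have e4 : 2 * vv j - 1 = uu j := by omega
      rw [e3, deg_odd _ (by omega), e5, e4, hu, deg_even _ hvp, hv]
      omega

lemma stern_main : ∀ a : ℕ, ∀ s k r : ℕ, a = k + s → 1 ≤ r → 2^k < 3*r → 3*r < 2^(k+1) →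
    (sternP (2^a - r)).natDegree = s + (sternP r).natDegree := by
  intro a
  induction a using Nat.strong_induction_on with
  | _ a IH =>
  intro s k r hak hr h1 h2
  have hk1 : 1 ≤ k := by
    by_contra hk
    have hk0 : k = 0 := by omega
    subst hk0
    norm_num at h2
    omega
  rcases Nat.even_or_odd r with ⟨r', hrr'⟩ | ⟨q, hq⟩
  · -- r even
    have hrr : r = 2*r' := by omega
    have hr'1 : 1 ≤ r' := by omega
    have hk2 : 2 ≤ k := by
      by_contra hk
      have : k = 1 := by omega
      subst this
      norm_num at h2
      omega
    obtain ⟨k', rfl⟩ : ∃ k', k = k'+1 := ⟨k-1, by omega⟩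
    obtain ⟨a', rfl⟩ : ∃ a', a = a'+1 := ⟨a-1, by omega⟩
    have p1 : 2^(k'+1) = 2*2^k' := by rw [pow_succ]; ring
    have p2 : 2^(k'+1+1) = 4*2^k' := by rw [pow_succ, pow_succ]; ring
    have pa : 2^(a'+1) = 2*2^a' := by rw [pow_succ]; ring
    have hmono : 2^k' ≤ 2^a' := Nat.pow_le_pow_right (by norm_num) (by omega)
    have hd2 : 2 ≤ 2^a' := by
      have : 2^1 ≤ 2^a' := Nat.pow_le_pow_right (by norm_num) (by omega)
      norm_num at this
      omega
    have cA : 2^k' < 3*r' := by omega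
    have cB : 3*r' < 2^(k'+1) := by omega
    have IH' := IH a' (by omega) s k' r' (by omega) hr'1 cA cB
    have hpos : 1 ≤ 2^a' - r' := by omega
    rw [show 2^(a'+1) - r = 2*(2^a' - r') from by omega, deg_even _ hpos, IH',
      hrr, deg_even _ hr'1]
    omega
  · -- r odd
    rcases Nat.eq_zero_or_pos q with hq0 | hq1
    · -- r = 1
      subst hq0
      have hr1 : r = 1 := by omega
      subst hr1
      have hk : k = 1 := by
        by_contra hk'
        have h4 : 2^2 ≤ 2^k := Nat.pow_le_pow_right (by norm_num) (by omega)
        norm_num at h4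
        omega
      subst hk
      have hd1 : (sternP 1).natDegree = 0 := by simp [sternP]
      rcases Nat.eq_zero_or_pos s with hs0 | hs1
      · subst hs0
        have ha : a = 1 := by omega
        subst ha
        simp [show (2:ℕ)^1 - 1 = 1 from rfl, hd1]
      · obtain ⟨s1, rfl⟩ : ∃ s1, s = s1+1 := ⟨s-1, by omega⟩
        have ha : a = s1+2 := by omega
        subst ha
        have hpa : 2^(s1+2) = 2*2^(s1+1) := by rw [pow_succ]; ring
        have h2s : 1 < 2^(s1+1) := Nat.one_lt_two_pow_iff.mpr (by omega)
        have me : 2^(s1+2) - 1 = 2*(2^(s1+1) - 1) + 1 := by omega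
        have hm : 1 ≤ 2^(s1+1) - 1 := by omega
        rw [me, deg_odd _ hm, show 2^(s1+1) - 1 + 1 = 2^(s1+1) from by omega, deg_pow]
        have IH1 := IH (s1+1) (by omega) s1 1 1 (by omega) (by norm_num) (by norm_num)
          (by norm_num)
        omega
    · -- r = 2q+1, q ≥ 1
      have hk3 : 3 ≤ k := by
        by_contra hk
        have h8 : 2^(k+1) ≤ 2^3 := Nat.pow_le_pow_right (by norm_num) (by omega)
        norm_num at h8
        omega
      obtain ⟨k2, rfl⟩ : ∃ k2, k = k2 + 2 := ⟨k-2, by omega⟩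
      have hk21 : 1 ≤ k2 := by omega
      obtain ⟨a1, rfl⟩ : ∃ a1, a = a1 + 1 := ⟨a-1, by omega⟩
      have hp0 : 2^(k2+1) = 2*2^k2 := by rw [pow_succ]; ring
      have hp1 : 2^(k2+2) = 4*2^k2 := by rw [pow_succ, pow_succ]; ring
      have hp2 : 2^(k2+2+1) = 8*2^k2 := by rw [pow_succ, pow_succ, pow_succ]; ring
      have hP2 : 2 ≤ 2^k2 := by
        have : 2^1 ≤ 2^k2 := Nat.pow_le_pow_right (by norm_num) hk21
        norm_num at this
        omega
      have hpa : 2^(a1+1) = 2*2^a1 := by rw [pow_succ]; ring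
      have hmono : 2^(k2+1) ≤ 2^a1 := Nat.pow_le_pow_right (by norm_num) (by omega)
      have hq2 : q + 2 ≤ 2^a1 := by omega
      have me : 2^(a1+1) - r = 2*(2^a1 - (q+1)) + 1 := by omega
      have hm1 : 1 ≤ 2^a1 - (q+1) := by omega
      have e21 : 2^a1 - (q+1) + 1 = 2^a1 - q := by omega
      rw [me, deg_odd _ hm1, e21, hq, deg_odd _ hq1]
      rcases Nat.even_or_odd q with ⟨u, hu⟩ | ⟨u, hu⟩
      · -- q even
        have hne : 2^(k2+1) ≠ 3*q := fun hc => three_ndvd_pow2 (k2+1) ⟨q, hc⟩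
        have hqlow : 2^(k2+1) < 3*q := by omega
        have hqhigh : 3*q < 2^(k2+1+1) := by
          have : 2^(k2+1+1) = 4*2^k2 := by rw [pow_succ, pow_succ]; ring
          omega
        have IHq := IH a1 (by omega) s (k2+1) q (by omega) (by omega) hqlow hqhigh
        have hne2 : 3*(q+1) ≠ 2^(k2+2) := fun hc => three_ndvd_pow2 (k2+2) ⟨q+1, hc.symm⟩
        rcases Nat.lt_or_ge (3*(q+1)) (2^(k2+2)) with hA | hB
        · -- non-boundary
          have hA' : 3*(q+1) < 2^(k2+1+1) := by
            have : 2^(k2+1+1) = 4*2^k2 := by rw [pow_succ, pow_succ]; ring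
            omega
          have IHq1 := IH a1 (by omega) s (k2+1) (q+1) (by omega) (by omega)
            (by omega) hA'
          omega
        · -- boundary: 3(q+1) = 2^(k2+2) + 1
          have heq : 3*(q+1) = 2^(k2+2) + 1 := by omega
          have hPm : 2^k2 % 3 = 2 := by omega
          rcases pow2_mod3 k2 with ⟨_, hm3⟩ | ⟨ho, _⟩
          · omega
          · obtain ⟨j, hj⟩ := ho
            have hPj : 2^k2 = 2*4^j := by rw [hj]; exact pow2_odd_eq j
            obtain ⟨husp1, husp2⟩ := uu_spec j
            obtain ⟨du, dv⟩ := deg_uu j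
            have h44 : 4^(j+1) = 4*4^j := by rw [pow_succ]; ring
            have h4p : 1 ≤ 4^j := Nat.one_le_pow _ _ (by norm_num)
            have hqu : q = 2 * uu j := by omega
            have e2v : uu j + 1 = 2 * vv j := by omega
            have dq : (sternP q).natDegree = 1 + j := by
              rw [hqu, deg_even _ (uu_pos j).1, du]
            have dq1 : (sternP (q+1)).natDegree = j + 1 := by
              rw [show q+1 = 2*uu j + 1 from by omega, deg_odd _ (uu_pos j).1, du,
                e2v, deg_even _ (uu_pos j).2, dv]
              omega
            rcases Nat.eq_zero_or_pos s with hs0 | hs1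
            · -- s = 0
              have hh : 2^a1 = 2^(k2+1) := by rw [show a1 = k2+1 from by omega]
              have hsub : 2^a1 - (q+1) = uu j := by omega
              have t1 : (sternP (2^a1 - (q+1))).natDegree = j := by rw [hsub]; exact du
              omega
            · -- s ≥ 1
              have c1 : 2^(k2+2) < 3*(q+1) := by omega
              have c2 : 3*(q+1) < 2^(k2+2+1) := by omega
              have IHq1 := IH a1 (by omega) (s-1) (k2+2) (q+1) (by omega) (by omega) c1 c2
              omega
      · -- q odd
        have hne2 : 3*(q+1) ≠ 2^(k2+2) := fun hc => three_ndvd_pow2 (k2+2) ⟨q+1, hc.symm⟩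
        have hq1high : 3*(q+1) < 2^(k2+1+1) := by
          have : 2^(k2+1+1) = 4*2^k2 := by rw [pow_succ, pow_succ]; ring
          omega
        have hq1low : 2^(k2+1) < 3*(q+1) := by omega
        have IHq1 := IH a1 (by omega) s (k2+1) (q+1) (by omega) (by omega) hq1low hq1high
        have hneq : 2^(k2+1) ≠ 3*q := fun hc => three_ndvd_pow2 (k2+1) ⟨q, hc⟩
        by_cases hb : 2^(k2+1) ≤ 3*q
        · -- non-boundary
          have hqlow : 2^(k2+1) < 3*q := by omega
          have hqhigh : 3*q < 2^(k2+1+1) := by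
            have : 2^(k2+1+1) = 4*2^k2 := by rw [pow_succ, pow_succ]; ring
            omega
          have IHq := IH a1 (by omega) s (k2+1) q (by omega) (by omega) hqlow hqhigh
          omega
        · -- boundary: 3q + 1 = 2^(k2+1)
          have heq : 3*q + 1 = 2^(k2+1) := by omega
          have hPm : 2^k2 % 3 = 2 := by omega
          rcases pow2_mod3 k2 with ⟨_, hm3⟩ | ⟨ho, _⟩
          · omega
          · obtain ⟨j, hj⟩ := ho
            have hPj : 2^k2 = 2*4^j := by rw [hj]; exact pow2_odd_eq j
            obtain ⟨husp1, husp2⟩ := uu_spec j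
            obtain ⟨du, dv⟩ := deg_uu j
            have h44 : 4^(j+1) = 4*4^j := by rw [pow_succ]; ring
            have h4p : 1 ≤ 4^j := Nat.one_le_pow _ _ (by norm_num)
            have hqu : q = uu j := by omega
            have dq : (sternP q).natDegree = j := by rw [hqu, du]
            have dq1 : (sternP (q+1)).natDegree = 1 + j := by
              rw [show q+1 = 2*vv j from by omega, deg_even _ (uu_pos j).2, dv]
            have c1 : 2^k2 < 3*q := by omega
            have c2 : 3*q < 2^(k2+1) := by omega
            have IHq := IH a1 (by omega) (s+1) k2 q (by omega) (by omega) c1 c2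
            omega

lemma bsd_bound : ∀ (k : ℕ) (c : ℕ → ℤ), (∀ j, c j = -1 ∨ c j = 0 ∨ c j = 1) →
    (∀ j, c j = 0 ∨ c (j+1) = 0) →
    3 * ∑ j ∈ Finset.range k, c j * 2^j < 2^(k+1) ∧
    -(2^(k+1) : ℤ) < 3 * ∑ j ∈ Finset.range k, c j * 2^j := by
  intro k
  induction k using Nat.strong_induction_on with
  | _ k IH =>
  intro c hd hna
  match k with
  | 0 => simp
  | 1 =>
    simp only [Finset.sum_range_one, pow_zero, mul_one]
    rcases hd 0 with h | h | h <;> rw [h] <;> norm_num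
  | (m+2) =>
    rw [Finset.sum_range_succ]
    have IH1 := IH (m+1) (by omega) c hd hna
    have IH0 := IH m (by omega) c hd hna
    have hQ : (0:ℤ) < 2^(m+1) := by positivity
    have e2 : (2:ℤ)^(m+2) = 2 * 2^(m+1) := by rw [pow_succ]; ring
    have e3 : (2:ℤ)^(m+3) = 4 * 2^(m+1) := by rw [pow_succ, pow_succ]; ring
    rcases hd (m+1) with h | h | h
    · have hcm : c m = 0 := by rcases hna m with h' | h' ; exact h' ; omega
      have : ∑ j ∈ Finset.range (m+1), c j * 2^j = ∑ j ∈ Finset.range m, c j * 2^j := by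
        rw [Finset.sum_range_succ, hcm]; ring
      rw [this, h]
      have e1 : (2:ℤ)^(m+1) = 2 * 2^m := by rw [pow_succ]; ring
      have h2m : (0:ℤ) < 2^m := by positivity
      constructor <;> nlinarith [IH0.1, IH0.2]
    · rw [h]
      simp only [zero_mul, add_zero]
      constructor <;> nlinarith [IH1.1, IH1.2]
    · have hcm : c m = 0 := by rcases hna m with h' | h' ; exact h' ; omega
      have : ∑ j ∈ Finset.range (m+1), c j * 2^j = ∑ j ∈ Finset.range m, c j * 2^j := by
        rw [Finset.sum_range_succ, hcm]; ring
      rw [this, h]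
      have e1 : (2:ℤ)^(m+1) = 2 * 2^m := by rw [pow_succ]; ring
      have h2m : (0:ℤ) < 2^m := by positivity
      constructor <;> nlinarith [IH0.1, IH0.2]

lemma naf_interval (r k : ℕ) (hr : 1 ≤ r) (h : HasNAFLen (r : ℤ) k) :
    2^k < 3*r ∧ 3*r < 2^(k+1) := by
  obtain ⟨b, ⟨hd, hna, hlead⟩, hval⟩ := h
  set c : ℕ → ℤ := fun j => if h : j < k then b ⟨j, h⟩ else 0 with hc
  have hcd : ∀ j, c j = -1 ∨ c j = 0 ∨ c j = 1 := by
    intro j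
    by_cases hj : j < k
    · have := hd ⟨j, hj⟩
      simp [Set.mem_insert_iff] at this
      simp only [hc, dif_pos hj]
      tauto
    · simp [hc, dif_neg hj]
  have hcna : ∀ j, c j = 0 ∨ c (j+1) = 0 := by
    intro j
    by_cases hj : j + 1 < k
    · have := hna ⟨j, by omega⟩ hj
      simp only [hc, dif_pos (show j < k by omega), dif_pos hj]
      exact this
    · right; simp [hc, dif_neg hj]
  have hsum : (r : ℤ) = ∑ j ∈ Finset.range k, c j * 2^j := by
    rw [← hval]
    unfold bsdVal
    rw [Finset.sum_range fun j => c j * 2^j]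
    apply Finset.sum_congr rfl
    intro j _
    simp [hc, j.isLt]
  match k with
  | 0 =>
    simp at hsum
    omega
  | (m+1) =>
    have hlead' : c m ≠ 0 := by
      have := hlead (by omega)
      simpa [hc, show m < m + 1 by omega] using this
    have hb := bsd_bound (m+1) c hcd hcna
    have hupper : 3 * (r:ℤ) < 2^(m+2) := by rw [hsum]; exact hb.1
    have hlower : 2^(m+1) < 3 * (r:ℤ) := by
      match m with
      | 0 =>
        rcases hcd 0 with h | h | h
        · simp [Finset.sum_range_one, h] at hsum
        · exact absurd h hlead'
        · simp [Finset.sum_range_one, h] at hsum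
          norm_num [hsum]
      | (n+1) =>
        have hcn : c n = 0 := by rcases hcna n with h' | h' ; exact h' ; exact absurd h' hlead'
        have hsplit : (r:ℤ) = (∑ j ∈ Finset.range n, c j * 2^j) + c (n+1) * 2^(n+1) := by
          rw [hsum, Finset.sum_range_succ, Finset.sum_range_succ, hcn]; ring
        have hb0 := bsd_bound n c hcd hcna
        have h2n : (0:ℤ) < 2^(n+1) := by positivity
        have e1 : (2:ℤ)^(n+2) = 2 * 2^(n+1) := by rw [pow_succ]; ring
        rcases hcd (n+1) with h | h | h
        · exfalso
          rw [h] at hsplit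
          have : (0:ℤ) < r := by exact_mod_cast hr
          nlinarith [hb0.1, hb0.2]
        · exact absurd h hlead'
        · rw [h] at hsplit
          nlinarith [hb0.1, hb0.2]
    have c1 : ((2^(m+1) : ℕ) : ℤ) = 2^(m+1) := by push_cast; ring
    have c2 : ((2^(m+2) : ℕ) : ℤ) = 2^(m+2) := by push_cast; ring
    constructor <;> zify <;> omega

end SternAux


theorem stern_deg_compare (a s r : ℕ) (ha : 1 ≤ a) (hs : s < a) (hr : 0 < r)
    (h : HasNAFLen (r : ℤ) (a - s)) :
    (sternP (2 ^ a - r)).natDegree = s + (sternP r).natDegree := by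
  have hks := naf_interval r (a-s) hr h
  exact stern_main a s (a-s) r (by omega) hr hks.1 hks.2
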